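/- The ℚ-linear functional φ on ℚ[χ₁,...,χ_n] defined on monomials by φ(χ^μ) = 1 if μ₁ = ... = μ_n = p(p+3)/2 for some p ∈ ℕ, and 0 otherwise, is not killed by any nonzero polynomial acting by shift: for every nonzero P ∈ ℚ[χ] there exists a monomial χ_ν such that φ(χ_ν · P) ≠ 0. -/
import Mathlib


open MvPolynomial

lemma two_mul_tri (q : ℕ) : 2 * (q * (q + 3) / 2) = q * (q + 3) := by
  apply Nat.mul_div_cancel'
  have : q * (q + 3) = q * (q + 1) + 2 * q := by ring
  rw [this]
  exact Dvd.dvd.add (even_iff_two_dvd.mp (Nat.even_mul_succ_self q)) ⟨q, rfl⟩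

/-- The `ℚ`-linear functional `φ` on `ℚ[χ₁,...,χ_n]` whose value on
a monomial `χ^μ` is `1` if `μ₁ = ... = μ_n = p(p+3)/2` for some `p ∈ ℕ` and `0`
otherwise is not killed by any nonzero polynomial under the shift action: for
every nonzero `P` there is a monomial `χ_ν` with `φ(χ_ν · P) ≠ 0`. -/
theorem functional_not_killed_by_shift
    {n : ℕ} (φ : MvPolynomial (Fin n) ℚ →ₗ[ℚ] ℚ)
    (hφ1 : ∀ (μ : Fin n →₀ ℕ) (p : ℕ),
      (∀ i, μ i = p * (p + 3) / 2) → φ (monomial μ (1 : ℚ)) = 1)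
    (hφ0 : ∀ μ : Fin n →₀ ℕ,
      (¬ ∃ p : ℕ, ∀ i, μ i = p * (p + 3) / 2) → φ (monomial μ (1 : ℚ)) = 0)
    (P : MvPolynomial (Fin n) ℚ) (hP : P ≠ 0) :
    ∃ ν : Fin n →₀ ℕ, φ (monomial ν (1 : ℚ) * P) ≠ 0 := by
  classical
  obtain ⟨μ₀, hμ₀⟩ := (support_nonempty.mpr hP)
  set p : ℕ := P.support.sup (fun μ => Finset.univ.sup μ) with hp
  have hbound : ∀ μ ∈ P.support, ∀ i, μ i ≤ p := by
    intro μ hμ i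
    exact le_trans (Finset.le_sup (f := ⇑μ) (Finset.mem_univ i))
      (Finset.le_sup (f := fun σ : Fin n →₀ ℕ => Finset.univ.sup ⇑σ) hμ)
  set d : ℕ := p * (p + 3) / 2 with hdd
  have hd2 : 2 * d = p * (p + 3) := two_mul_tri p
  have hpd : p ≤ d := by nlinarith
  set ν : Fin n →₀ ℕ := Finsupp.equivFunOnFinite.symm (fun i => d - μ₀ i) with hν
  have hνi : ∀ i, ν i = d - μ₀ i := fun i => rfl
  refine ⟨ν, ?_⟩
  have hexp : monomial ν (1 : ℚ) * P
      = ∑ μ ∈ P.support, monomial (ν + μ) (P.coeff μ) := by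
    conv_lhs => rw [← P.support_sum_monomial_coeff]
    rw [Finset.mul_sum]
    refine Finset.sum_congr rfl fun μ _ => ?_
    rw [monomial_mul, one_mul]
  have hval : φ (monomial ν (1 : ℚ) * P) = P.coeff μ₀ := by
    rw [hexp, map_sum]
    have key : ∀ μ ∈ P.support,
        φ (monomial (ν + μ) (P.coeff μ)) = if μ = μ₀ then P.coeff μ₀ else 0 := by
      intro μ hμ
      have hmono : (monomial (ν + μ) (P.coeff μ)) = P.coeff μ • monomial (ν + μ) (1 : ℚ) := by
        rw [smul_monomial, smul_eq_mul, mul_one]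
      rw [hmono, map_smul, smul_eq_mul]
      by_cases hcase : μ = μ₀
      · subst hcase
        rw [if_pos rfl, hφ1 (ν + μ) p ?_, mul_one]
        intro i
        have := hbound μ hμ i
        rw [Finsupp.add_apply, hνi i]
        omega
      · rw [if_neg hcase, hφ0 (ν + μ) ?_, mul_zero]
        rintro ⟨q, hq⟩
        obtain ⟨i, hi⟩ : ∃ i, μ i ≠ μ₀ i := by
          by_contra hcon
          push_neg at hcon
          exact hcase (Finsupp.ext hcon)
        have h1 := hq i
        have h2 : 2 * (q * (q + 3) / 2) = q * (q + 3) := two_mul_tri q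
        have hb1 := hbound μ hμ i
        have hb2 := hbound μ₀ hμ₀ i
        -- from h1: d - μ₀ i + μ i = q*(q+3)/2
        have heq : q * (q + 3) + 2 * (μ₀ i) = p * (p + 3) + 2 * (μ i) := by
          rw [Finsupp.add_apply, hνi i] at h1
          omega
        have hq1 : ¬ q < p := by intro h; nlinarith
        have hq2 : ¬ p < q := by intro h; nlinarith
        have : q = p := by omega
        subst this
        omega
    rw [Finset.sum_congr rfl key, Finset.sum_ite_eq' P.support μ₀ (fun _ => P.coeff μ₀),
      if_pos hμ₀]
  rw [hval]
  exact mem_support_iff.mp hμ₀
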